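/- arXiv:2505.11226 — 3 statements merged into one kernel-verified Lean document; each statement's English description precedes it below -/
import Mathlib

section
/- Fix an integer n ≥ 1, a real number κ with 1 ≤ κ ≤ n, and constants c > 0, A ≥ 0, ε > 0. Suppose S ⊆ ℤⁿ satisfies #(S ∩ [−H,H]ⁿ) ≤ c·H^κ for every real H ≥ 1. Then there exists M₀ depending only on n, κ, ε such that for every real M ≥ M₀ there is a constant C, depending only on n, A, ε, c and M, such that for all real Y > 0: Σ_{u ∈ S} (∏_{i=1}^{n} (1 + |u_i|/Y)^{−M}) · (log(1+|u|))^A ≤ C · max{1, Y^{κ+ε}}, where |u| := max_{1≤i≤n} |u_i|. -/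
open Polynomial

noncomputable section

/-- The rational function field `ℚ(X₁,…,Xₙ)`. -/
abbrev RF (n : ℕ) := FractionRing (MvPolynomial (Fin n) ℚ)

/-- Base change a polynomial `F ∈ ℤ[Y,X₁,…,Xₙ]` (written as a polynomial in `Y`
with coefficients in `ℤ[X₁,…,Xₙ]`) to `ℚ[Y,X₁,…,Xₙ]`. -/
def toQ {n : ℕ} (F : Polynomial (MvPolynomial (Fin n) ℤ)) :
    Polynomial (MvPolynomial (Fin n) ℚ) :=
  F.map (MvPolynomial.map (Int.castRingHom ℚ))

/-- View a polynomial in `ℚ[X][Y]` as a polynomial in `ℚ(X)[Y]`. -/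
def toFracQ {n : ℕ} (F : Polynomial (MvPolynomial (Fin n) ℚ)) : Polynomial (RF n) :=
  F.map (algebraMap (MvPolynomial (Fin n) ℚ) (RF n))

/-- View a polynomial in `ℤ[X][Y]` as a polynomial in `ℚ(X)[Y]`. -/
def toFrac {n : ℕ} (F : Polynomial (MvPolynomial (Fin n) ℤ)) : Polynomial (RF n) :=
  toFracQ (toQ F)

/-- The degree of `F(Y,X)` in the variable `Xᵢ`. -/
def degX {n : ℕ} {R : Type*} [CommSemiring R]
    (F : Polynomial (MvPolynomial (Fin n) R)) (i : Fin n) : ℕ :=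
  F.support.sup fun k => (F.coeff k).degreeOf i

/-- The total degree of `F(Y,X₁,…,Xₙ)` as a polynomial in `n+1` variables. -/
def totalDeg {n : ℕ} {R : Type*} [CommSemiring R]
    (F : Polynomial (MvPolynomial (Fin n) R)) : ℕ :=
  F.support.sup fun k => k + (F.coeff k).totalDegree

/-- `‖g‖`: the maximum absolute value of a coefficient of `g ∈ ℤ[X₁,…,Xₙ]`. -/
def mvNorm {n : ℕ} (g : MvPolynomial (Fin n) ℤ) : ℕ :=
  g.support.sup fun m => (g.coeff m).natAbs

/-- `‖F‖`: the maximum absolute value of a coefficient of `F ∈ ℤ[Y,X₁,…,Xₙ]`. -/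
def polyNorm {n : ℕ} (F : Polynomial (MvPolynomial (Fin n) ℤ)) : ℕ :=
  F.support.sup fun k => mvNorm (F.coeff k)

/-- The counting function
`N(F,B) = #{x ∈ ℤⁿ ∩ [−B,B]ⁿ : ∃ y ∈ ℤ, F(y,x) = 0}`. -/
def NFB {n : ℕ} (F : Polynomial (MvPolynomial (Fin n) ℤ)) (B : ℝ) : ℕ :=
  Set.ncard {x : Fin n → ℤ | (∀ i, |(x i : ℝ)| ≤ B) ∧
    ∃ y : ℤ, Polynomial.eval y (F.map (MvPolynomial.eval x)) = 0}

/-- `F ∈ ℤ[Y,X₁,…,Xₙ]` is absolutely irreducible: irreducible over `ℚ̄`. -/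
def AbsIrred {n : ℕ} (F : Polynomial (MvPolynomial (Fin n) ℤ)) : Prop :=
  Irreducible (F.map (MvPolynomial.map (Int.castRingHom (AlgebraicClosure ℚ))))

/-- `G` has positive degree in `Y` and in each variable `Xᵢ`. -/
def AllPosDeg {n : ℕ} (G : Polynomial (MvPolynomial (Fin n) ℤ)) : Prop :=
  0 < G.natDegree ∧ ∀ i : Fin n, 0 < degX G i

/-- A field extension `M` of `ℚ(X₁,…,Xₙ)` is an `n`-genuine extension: every
`G ∈ ℤ[Y,X₁,…,Xₙ]` irreducible over `ℚ(X)` with `M ≅ ℚ(X)[Y]/(G)` has positive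
degree in each of `Y, X₁, …, Xₙ`. -/
def IsGenuineExt (n : ℕ) (M : Type*) [Field M] [Algebra (RF n) M] : Prop :=
  ∀ G : Polynomial (MvPolynomial (Fin n) ℤ), Irreducible (toFrac G) →
    Nonempty (AdjoinRoot (toFrac G) ≃ₐ[RF n] M) → AllPosDeg G

/-- A field extension `M` of `ℚ(X₁,…,Xₙ)` is strongly `n`-genuine: every
intermediate field strictly containing `ℚ(X)` is `n`-genuine. -/
def IsStronglyGenuineExt (n : ℕ) (M : Type*) [Field M] [Algebra (RF n) M] : Prop :=
  ∀ M' : IntermediateField (RF n) M, M' ≠ ⊥ → IsGenuineExt n M'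

/-- The extension `ℚ(X)[Y]/(Fq)` presented by `Fq ∈ ℚ[X][Y]` is `n`-genuine. -/
def GenuineExtOfQ {n : ℕ} (Fq : Polynomial (MvPolynomial (Fin n) ℚ)) : Prop :=
  ∀ G : Polynomial (MvPolynomial (Fin n) ℤ), Irreducible (toFrac G) →
    Nonempty (AdjoinRoot (toFrac G) ≃ₐ[RF n] AdjoinRoot (toFracQ Fq)) → AllPosDeg G

/-- The extension `ℚ(X)[Y]/(Fq)` presented by `Fq ∈ ℚ[X][Y]` is strongly
`n`-genuine: for any field `M` isomorphic over `ℚ(X)` to `ℚ(X)[Y]/(Fq)`, every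
intermediate field strictly containing `ℚ(X)` is `n`-genuine. -/
def StronglyGenuineExtOfQ {n : ℕ} (Fq : Polynomial (MvPolynomial (Fin n) ℚ)) : Prop :=
  ∀ (M : Type) [Field M] [Algebra (RF n) M],
    Nonempty (AdjoinRoot (toFracQ Fq) ≃ₐ[RF n] M) → IsStronglyGenuineExt n M

/-- An absolutely irreducible `F ∈ ℤ[Y,X₁,…,Xₙ]` is an `n`-genuine polynomial. -/
def IsGenuinePoly {n : ℕ} (F : Polynomial (MvPolynomial (Fin n) ℤ)) : Prop :=
  AbsIrred F ∧ GenuineExtOfQ (toQ F)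

/-- An absolutely irreducible `F ∈ ℤ[Y,X₁,…,Xₙ]` is a strongly `n`-genuine polynomial. -/
def IsStronglyGenuinePoly {n : ℕ} (F : Polynomial (MvPolynomial (Fin n) ℤ)) : Prop :=
  AbsIrred F ∧ StronglyGenuineExtOfQ (toQ F)

/-- The ring map `ℚ[X₁,…,Xₙ] → ℚ[X₁,…,Xₙ]` induced by the linear substitution
`Xᵢ ↦ Σⱼ σᵢⱼ Xⱼ`. -/
def lsubMv {n : ℕ} (σ : Matrix (Fin n) (Fin n) ℚ) :
    MvPolynomial (Fin n) ℚ →+* MvPolynomial (Fin n) ℚ :=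
  (MvPolynomial.aeval (R := ℚ)
    fun i => ∑ j, MvPolynomial.C (σ i j) * MvPolynomial.X j).toRingHom

/-- `F_σ(Y,X) := F(Y,σ(X))` for a linear change of variables `σ`. -/
def applyGL {n : ℕ} (σ : Matrix (Fin n) (Fin n) ℚ)
    (Fq : Polynomial (MvPolynomial (Fin n) ℚ)) : Polynomial (MvPolynomial (Fin n) ℚ) :=
  Fq.map (lsubMv σ)

/-- `F` is `(1,n)`-allowable: absolutely irreducible, monic in `Y`, and
`ℚ(X)[Y]/(F_σ)` is an `n`-genuine extension for every `σ ∈ GLₙ(ℚ)`. -/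
def IsAllowable {n : ℕ} (F : Polynomial (MvPolynomial (Fin n) ℤ)) : Prop :=
  AbsIrred F ∧ F.Monic ∧
    ∀ σ : Matrix (Fin n) (Fin n) ℚ, IsUnit σ.det → GenuineExtOfQ (applyGL σ (toQ F))

/-- `F` is strongly `(1,n)`-allowable: absolutely irreducible, monic in `Y`, and
`ℚ(X)[Y]/(F_σ)` is a strongly `n`-genuine extension for every `σ ∈ GLₙ(ℚ)`. -/
def IsStronglyAllowable {n : ℕ} (F : Polynomial (MvPolynomial (Fin n) ℤ)) : Prop :=
  AbsIrred F ∧ F.Monic ∧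
    ∀ σ : Matrix (Fin n) (Fin n) ℚ, IsUnit σ.det → StronglyGenuineExtOfQ (applyGL σ (toQ F))

/-- `F` has the form (1.2) with parameter `m`:
`F = Y^{md} + f₁(X) Y^{m(d-1)} + ⋯ + f_{d-1}(X) Y^m + f_d(X)` with `f_d ≠ 0`. -/
def HasForm (n m : ℕ) (F : Polynomial (MvPolynomial (Fin n) ℤ)) : Prop :=
  ∃ (d : ℕ) (f : ℕ → MvPolynomial (Fin n) ℤ), 1 ≤ d ∧ f d ≠ 0 ∧
    F = Polynomial.X ^ (m * d) +
      ∑ j ∈ Finset.Icc 1 d, Polynomial.C (f j) * Polynomial.X ^ (m * (d - j))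

/-- `P` has a linear factor in `Y`: `P = (Y − Q(X))·H̃(Y,X)`. -/
def HasLinearFactorY {n : ℕ} {R : Type*} [CommRing R]
    (P : Polynomial (MvPolynomial (Fin n) R)) : Prop :=
  ∃ (Q : MvPolynomial (Fin n) R) (H : Polynomial (MvPolynomial (Fin n) R)),
    P = (Polynomial.X - Polynomial.C Q) * H

/-- The canonical map `ℚ[X₁,…,Xₙ] → ℚ(X)[Y]/(F)`. -/
def structMap {n : ℕ} (F : Polynomial (MvPolynomial (Fin n) ℤ)) :
    MvPolynomial (Fin n) ℚ →+* AdjoinRoot (toFrac F) :=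
  (algebraMap (RF n) (AdjoinRoot (toFrac F))).comp
    (algebraMap (MvPolynomial (Fin n) ℚ) (RF n))

/-- `z ∈ ℚ(X)[Y]/(F)` lies in the subfield `ℚ((Xᵢ)_{i≠j})`: it can be written
as a quotient of two polynomials not involving `Xⱼ`. -/
def CoordMem {n : ℕ} (j : Fin n) (F : Polynomial (MvPolynomial (Fin n) ℤ))
    (z : AdjoinRoot (toFrac F)) : Prop :=
  ∃ a b : MvPolynomial (Fin n) ℚ,
    MvPolynomial.degreeOf j a = 0 ∧ MvPolynomial.degreeOf j b = 0 ∧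
    structMap F b ≠ 0 ∧ z * structMap F b = structMap F a

/-- `z ∈ ℚ(X)[Y]/(F)` is algebraic over the subfield `ℚ((Xᵢ)_{i≠j})`. -/
def AlgOverCoord {n : ℕ} (j : Fin n) (F : Polynomial (MvPolynomial (Fin n) ℤ))
    (z : AdjoinRoot (toFrac F)) : Prop :=
  ∃ P : Polynomial (AdjoinRoot (toFrac F)), P ≠ 0 ∧ (∀ k, CoordMem j F (P.coeff k)) ∧
    Polynomial.eval z P = 0

/-- Substitute `Xᵢ = xᵢ` for `i ∈ I` into `F`, over `ℚ̄`. -/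
def substSome {n : ℕ} (I : Finset (Fin n)) (x : Fin n → ℚ)
    (F : Polynomial (MvPolynomial (Fin n) ℤ)) :
    Polynomial (MvPolynomial (Fin n) (AlgebraicClosure ℚ)) :=
  (toQ F).map
    ((MvPolynomial.aeval (R := ℚ) fun i =>
      if i ∈ I then MvPolynomial.C (algebraMap ℚ (AlgebraicClosure ℚ) (x i))
      else MvPolynomial.X i).toRingHom)

/-- Substitute `Xᵢ = xᵢ` for all `i ≠ i₀` into `F`, over `ℚ̄`. -/
def substKeepFirst {n : ℕ} (i0 : Fin n) (x : {i : Fin n // i ≠ i0} → ℤ)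
    (F : Polynomial (MvPolynomial (Fin n) ℤ)) :
    Polynomial (MvPolynomial (Fin n) (AlgebraicClosure ℚ)) :=
  F.map
    ((MvPolynomial.aeval (R := ℤ) fun i =>
      if h : i = i0 then (MvPolynomial.X i : MvPolynomial (Fin n) (AlgebraicClosure ℚ))
      else MvPolynomial.C ((x ⟨i, h⟩ : ℤ) : AlgebraicClosure ℚ)).toRingHom)

/-- `‖L‖`: maximum absolute value of an entry of an integer matrix. -/
def matNorm {n : ℕ} (L : Matrix (Fin n) (Fin n) ℤ) : ℕ :=
  Finset.univ.sup fun p : Fin n × Fin n => (L p.1 p.2).natAbs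

/-- The standard additive character `e_p(a) = exp(2πi a/p)` on `ZMod p`. -/
def eZp (p : ℕ) (a : ZMod p) : ℂ :=
  Complex.exp (2 * Real.pi * Complex.I * (a.val : ℂ) / (p : ℂ))

theorem statement7 (n : ℕ) (hn : 1 ≤ n) (κ ε : ℝ) (hκ1 : 1 ≤ κ) (hκn : κ ≤ n)
    (hε : 0 < ε) :
    ∃ M₀ : ℝ, ∀ M : ℝ, M₀ ≤ M → ∀ c A : ℝ, 0 < c → 0 ≤ A → ∃ C : ℝ, 0 < C ∧
      ∀ S : Set (Fin n → ℤ),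
        (∀ H : ℝ, 1 ≤ H →
          (Set.ncard {u ∈ S | ∀ i, |(u i : ℝ)| ≤ H} : ℝ) ≤ c * H ^ κ) →
        ∀ Y : ℝ, 0 < Y →
          Summable (fun u : S =>
            (∏ i, (1 + |((u : Fin n → ℤ) i : ℝ)| / Y) ^ (-M)) *
              Real.log (1 + ((Finset.univ.sup fun i => ((u : Fin n → ℤ) i).natAbs : ℕ) : ℝ)) ^ A) ∧
          (∑' u : S,
            (∏ i, (1 + |((u : Fin n → ℤ) i : ℝ)| / Y) ^ (-M)) *
              Real.log (1 + ((Finset.univ.sup fun i => ((u : Fin n → ℤ) i).natAbs : ℕ) : ℝ)) ^ A)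
            ≤ C * max 1 (Y ^ (κ + ε)) := by
  classical
  refine ⟨(n : ℝ) + ε + 1, fun M hM c A hc hA => ?_⟩
  have hn1 : (1:ℝ) ≤ n := by exact_mod_cast hn
  have hM0 : 0 ≤ M := le_trans (by linarith) hM
  have hMκε : κ + ε ≤ M := by linarith
  have hκε0 : (0:ℝ) ≤ κ + ε := by linarith
  set k := ⌈A⌉₊ with hk
  set r : ℝ := (2:ℝ) ^ (-ε) with hr
  have hr0 : 0 < r := Real.rpow_pos_of_pos two_pos _
  have hr1 : r < 1 := Real.rpow_lt_one_of_one_lt_of_neg one_lt_two (by linarith)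
  have hsumr : Summable (fun j : ℕ => ((j:ℝ)+1)^k * r^j) := by
    have h1 : Summable (fun j : ℕ => ((j:ℕ):ℝ)^k * r^j) :=
      summable_pow_mul_geometric_of_norm_lt_one k
        (by rwa [Real.norm_eq_abs, abs_of_pos hr0])
    have h2 := (summable_nat_add_iff 1).2 h1
    have h3 : Summable (fun j : ℕ => r⁻¹ * ((((j+1:ℕ)):ℝ)^k * r^(j+1))) := h2.mul_left _
    refine h3.congr fun j => ?_
    have hrne : r ≠ 0 := ne_of_gt hr0
    push_cast
    field_simp
    ring
  have hTnonneg : ∀ j : ℕ, 0 ≤ ((j:ℝ)+1)^k * r^j := fun j => by positivity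
  set T : ℝ := ∑' j : ℕ, ((j:ℝ)+1)^k * r^j with hT
  have hT1 : (1:ℝ) ≤ T := by
    have h0 := Summable.le_tsum hsumr 0 (fun j _ => hTnonneg j)
    simpa using h0
  have h2κ : (0:ℝ) < (2:ℝ)^κ := Real.rpow_pos_of_pos two_pos _
  refine ⟨c * (2:ℝ)^κ * T, mul_pos (mul_pos hc h2κ) (lt_of_lt_of_le one_pos hT1),
    fun S hS Y hY => ?_⟩
  set V : ℝ := max 1 Y with hV
  have hV1 : (1:ℝ) ≤ V := le_max_left _ _
  have hV0 : (0:ℝ) < V := lt_of_lt_of_le one_pos hV1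
  have hYV : Y ≤ V := le_max_right _ _
  have hVκε0 : (0:ℝ) ≤ V ^ (κ+ε) := (Real.rpow_pos_of_pos hV0 _).le
  have hVmax : V ^ (κ + ε) = max 1 (Y ^ (κ + ε)) := by
    rcases le_total Y 1 with h | h
    · rw [hV, max_eq_left h, Real.one_rpow,
        max_eq_left (Real.rpow_le_one hY.le h hκε0)]
    · rw [hV, max_eq_right h, max_eq_right (Real.one_le_rpow h hκε0)]
  set m : S → ℕ := fun u => Finset.univ.sup fun i => ((u : Fin n → ℤ) i).natAbs with hm
  set f : S → ℝ := fun u =>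
      (∏ i, (1 + |((u : Fin n → ℤ) i : ℝ)| / Y) ^ (-M)) *
        Real.log (1 + (m u : ℝ)) ^ A with hf
  have hf0 : ∀ u, 0 ≤ f u := fun u => by
    apply mul_nonneg
    · exact Finset.prod_nonneg fun i _ => Real.rpow_nonneg (by positivity) _
    · exact Real.rpow_nonneg (Real.log_nonneg (le_add_of_nonneg_right (Nat.cast_nonneg _))) _
  set lvl : S → ℕ := fun u => Nat.log 2 (1 + m u) with hlvl
  have key : ∀ t : Finset S, ∑ u ∈ t, f u ≤ c * (2:ℝ)^κ * T * max 1 (Y ^ (κ+ε)) := by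
    intro t
    have hfib : ∀ j : ℕ, ∑ u ∈ t.filter (fun u => lvl u = j), f u
        ≤ c * (2:ℝ)^κ * V ^ (κ+ε) * (((j:ℝ)+1)^k * r^j) := by
      intro j
      set D : ℝ := (2:ℝ)^(j:ℕ) with hD
      have hD1 : (1:ℝ) ≤ D := one_le_pow₀ one_le_two
      have hD0 : (0:ℝ) < D := lt_of_lt_of_le one_pos hD1
      have hmlow : ∀ u : S, lvl u = j → D ≤ 1 + (m u : ℝ) := by
        intro u hj
        have h1 : 2 ^ (Nat.log 2 (1 + m u)) ≤ 1 + m u :=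
          Nat.pow_log_le_self 2 (by omega)
        rw [hlvl] at hj; simp only at hj; rw [hj] at h1
        have h2 := (Nat.cast_le (α := ℝ)).2 h1
        push_cast at h2
        rw [hD]; linarith
      have hmhigh : ∀ u : S, lvl u = j → 1 + (m u : ℝ) ≤ 2 * D := by
        intro u hj
        have h1 : 1 + m u < 2 ^ (Nat.log 2 (1 + m u) + 1) :=
          Nat.lt_pow_succ_log_self (by norm_num) _
        rw [hlvl] at hj; simp only at hj; rw [hj] at h1
        have h2 := (Nat.cast_le (α := ℝ)).2 (Nat.le_of_lt h1)
        push_cast at h2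
        rw [hD]
        calc (1:ℝ) + m u ≤ (2:ℝ)^(j+1) := h2
          _ = 2 * 2^j := by ring
      have hgmaxnn : (0:ℝ) ≤ (V / D) ^ (κ+ε) * ((j:ℝ)+1)^k := by positivity
      have helem : ∀ u ∈ t.filter (fun u => lvl u = j),
          f u ≤ (V / D) ^ (κ+ε) * ((j:ℝ)+1)^k := by
        intro u hu
        have hj : lvl u = j := by
          have := (Finset.mem_filter.mp hu).2
          exact this
        have hfacnn : ∀ i, (0:ℝ) ≤ (1 + |((u : Fin n → ℤ) i : ℝ)| / Y) ^ (-M) :=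
          fun i => Real.rpow_nonneg (by positivity) _
        have hfac1 : ∀ i, (1 + |((u : Fin n → ℤ) i : ℝ)| / Y) ^ (-M) ≤ 1 := fun i =>
          Real.rpow_le_one_of_one_le_of_nonpos
            (le_add_of_nonneg_right (by positivity)) (neg_nonpos.mpr hM0)
        have hprodbound : (∏ i, (1 + |((u : Fin n → ℤ) i : ℝ)| / Y) ^ (-M))
            ≤ (V / D) ^ (κ+ε) := by
          rcases le_or_gt 1 (V / D) with hvd | hvd
          · exact le_trans (Finset.prod_le_one (fun i _ => hfacnn i) (fun i _ => hfac1 i))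
              (Real.one_le_rpow hvd hκε0)
          · have hne : (Finset.univ : Finset (Fin n)).Nonempty := by
              have : Nonempty (Fin n) := ⟨⟨0, hn⟩⟩
              exact Finset.univ_nonempty
            obtain ⟨i0, -, hi0⟩ := Finset.exists_mem_eq_sup Finset.univ hne
              (fun i => ((u : Fin n → ℤ) i).natAbs)
            have hmu : m u = ((u : Fin n → ℤ) i0).natAbs := hi0
            have habs : |((u : Fin n → ℤ) i0 : ℝ)| = (m u : ℝ) := by
              rw [hmu, Nat.cast_natAbs, Int.cast_abs]
            have hpf : (∏ i, (1 + |((u : Fin n → ℤ) i : ℝ)| / Y) ^ (-M))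
                ≤ (1 + |((u : Fin n → ℤ) i0 : ℝ)| / Y) ^ (-M) := by
              rw [← Finset.mul_prod_erase Finset.univ _ (Finset.mem_univ i0)]
              have h1 : (∏ i ∈ Finset.univ.erase i0,
                  (1 + |((u : Fin n → ℤ) i : ℝ)| / Y) ^ (-M)) ≤ 1 :=
                Finset.prod_le_one (fun i _ => hfacnn i) (fun i _ => hfac1 i)
              have h2 := mul_le_mul_of_nonneg_left h1 (hfacnn i0)
              simpa using h2
            have hbase : D / V ≤ 1 + (m u : ℝ) / Y := by
              have h1 : D / V ≤ (1 + (m u:ℝ)) / V :=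
                div_le_div_of_nonneg_right (hmlow u hj) hV0.le
              have h3 : (1:ℝ)/V ≤ 1 := by rw [div_le_one hV0]; exact hV1
              have h4 : (m u:ℝ)/V ≤ (m u:ℝ)/Y :=
                div_le_div_of_nonneg_left (Nat.cast_nonneg _) hY hYV
              have h2 : (1 + (m u:ℝ)) / V ≤ 1 + (m u:ℝ)/Y := by
                rw [add_div]; linarith
              linarith
            have hDV0 : (0:ℝ) < D / V := div_pos hD0 hV0
            have hVD0 : (0:ℝ) < V / D := div_pos hV0 hD0
            have hstep : (1 + |((u : Fin n → ℤ) i0 : ℝ)| / Y) ^ (-M) ≤ (V/D)^(κ+ε) := by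
              rw [habs]
              have h5 : (1 + (m u:ℝ)/Y) ^ (-M) ≤ (D/V) ^ (-M) := by
                rw [Real.rpow_neg (by positivity), Real.rpow_neg hDV0.le]
                apply inv_anti₀
                · exact Real.rpow_pos_of_pos hDV0 _
                · exact Real.rpow_le_rpow hDV0.le hbase hM0
              have h6 : (D/V) ^ (-M) = (V/D)^M := by
                rw [Real.rpow_neg hDV0.le, ← Real.inv_rpow hDV0.le, inv_div]
              have h7 : (V/D)^M ≤ (V/D)^(κ+ε) :=
                Real.rpow_le_rpow_of_exponent_ge hVD0 hvd.le hMκε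
              calc (1 + (m u:ℝ)/Y) ^ (-M) ≤ (D/V) ^ (-M) := h5
                _ = (V/D)^M := h6
                _ ≤ (V/D)^(κ+ε) := h7
            exact le_trans hpf hstep
        have hlog : Real.log (1 + (m u:ℝ)) ^ A ≤ ((j:ℝ)+1)^k := by
          have hlg0 : 0 ≤ Real.log (1 + (m u:ℝ)) :=
            Real.log_nonneg (le_add_of_nonneg_right (Nat.cast_nonneg _))
          have h1 : Real.log (1 + (m u:ℝ)) ≤ (j:ℝ)+1 := by
            have h2 : Real.log (1 + (m u:ℝ)) ≤ Real.log (2*D) :=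
              Real.log_le_log (by positivity) (hmhigh u hj)
            have h3 : Real.log (2*D) = ((j:ℝ)+1) * Real.log 2 := by
              rw [hD, show (2:ℝ) * 2^j = 2^(j+1) by ring, Real.log_pow]
              push_cast; ring
            have h4 : Real.log 2 ≤ 1 := by
              have := Real.log_le_sub_one_of_pos (by norm_num : (0:ℝ) < 2)
              linarith
            have h5 : (0:ℝ) ≤ (j:ℝ)+1 := by positivity
            nlinarith
          calc Real.log (1 + (m u:ℝ)) ^ A ≤ ((j:ℝ)+1)^A :=
              Real.rpow_le_rpow hlg0 h1 hA
            _ ≤ ((j:ℝ)+1)^(k:ℝ) :=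
              Real.rpow_le_rpow_of_exponent_le (by simp) (Nat.le_ceil A)
            _ = ((j:ℝ)+1)^k := Real.rpow_natCast _ k
        calc f u = (∏ i, (1 + |((u : Fin n → ℤ) i : ℝ)| / Y) ^ (-M)) *
              Real.log (1 + (m u : ℝ)) ^ A := rfl
          _ ≤ (V / D) ^ (κ+ε) * ((j:ℝ)+1)^k := by
              apply mul_le_mul hprodbound hlog
                (Real.rpow_nonneg (Real.log_nonneg
                  (le_add_of_nonneg_right (Nat.cast_nonneg _))) _)
                (Real.rpow_nonneg (by positivity) _)
      have hcard : (((t.filter (fun u => lvl u = j)).card : ℕ) : ℝ) ≤ c * (2*D)^κ := by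
        set H : ℝ := 2 * D with hH
        have hH1 : (1:ℝ) ≤ H := by rw [hH]; nlinarith
        have hboxfin : {x : Fin n → ℤ | ∀ i, |(x i : ℝ)| ≤ H}.Finite := by
          apply Set.Finite.subset
            (Set.Finite.pi (fun i : Fin n => Set.finite_Icc (-(⌈H⌉)) ⌈H⌉))
          intro x hx
          simp only [Set.mem_pi, Set.mem_univ, Set.mem_Icc, forall_true_left]
          intro i
          have h1 : |(x i : ℝ)| ≤ H := hx i
          have h2 : |x i| ≤ ⌈H⌉ := by
            have h3 : ((|x i| : ℤ) : ℝ) ≤ (⌈H⌉ : ℝ) := by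
              push_cast
              exact le_trans h1 (Int.le_ceil H)
            exact_mod_cast h3
          exact abs_le.mp h2
        have hsub : ((((t.filter (fun u => lvl u = j)).image
            (fun u : S => (u : Fin n → ℤ))) : Finset (Fin n → ℤ)) : Set (Fin n → ℤ))
            ⊆ {u ∈ S | ∀ i, |(u i : ℝ)| ≤ H} := by
          intro x hx
          simp only [Finset.coe_image, Set.mem_image, Finset.mem_coe] at hx
          obtain ⟨u, hu, rfl⟩ := hx
          have hj : lvl u = j := (Finset.mem_filter.mp hu).2
          refine ⟨u.2, fun i => ?_⟩
          have h1 : ((u : Fin n → ℤ) i).natAbs ≤ m u :=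
            Finset.le_sup (f := fun i => ((u : Fin n → ℤ) i).natAbs) (Finset.mem_univ i)
          have h2 : (m u : ℝ) ≤ H := by
            have := hmhigh u hj
            rw [hH]; linarith
          have h3 : |((u : Fin n → ℤ) i : ℝ)| = (((u : Fin n → ℤ) i).natAbs : ℝ) := by
            rw [Nat.cast_natAbs, Int.cast_abs]
          rw [h3]
          exact le_trans (by exact_mod_cast h1) h2
        have hfsub : {u ∈ S | ∀ i, |(u i : ℝ)| ≤ H}.Finite :=
          Set.Finite.subset hboxfin (fun x hx => hx.2)
        have hcard1 : (t.filter (fun u => lvl u = j)).card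
            = ((t.filter (fun u => lvl u = j)).image (fun u : S => (u : Fin n → ℤ))).card :=
          (Finset.card_image_of_injective _ Subtype.val_injective).symm
        have hcard2 : (((t.filter (fun u => lvl u = j)).image
            (fun u : S => (u : Fin n → ℤ))).card : ℝ)
            ≤ (Set.ncard {u ∈ S | ∀ i, |(u i : ℝ)| ≤ H} : ℝ) := by
          have := Set.ncard_le_ncard hsub hfsub
          rw [Set.ncard_coe_finset] at this
          exact_mod_cast this
        calc (((t.filter (fun u => lvl u = j)).card : ℕ) : ℝ)
            = (((t.filter (fun u => lvl u = j)).image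
                (fun u : S => (u : Fin n → ℤ))).card : ℝ) := by rw [hcard1]
          _ ≤ (Set.ncard {u ∈ S | ∀ i, |(u i : ℝ)| ≤ H} : ℝ) := hcard2
          _ ≤ c * H ^ κ := hS H hH1
      have hDκε : (0:ℝ) < D ^ (κ+ε) := Real.rpow_pos_of_pos hD0 _
      have hDr : D ^ κ / D ^ (κ + ε) = r ^ j := by
        rw [← Real.rpow_sub hD0]
        have : κ - (κ + ε) = -ε := by ring
        rw [this, hD, ← Real.rpow_natCast 2 j, ← Real.rpow_mul (by norm_num : (0:ℝ) ≤ 2),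
          mul_comm, Real.rpow_mul (by norm_num : (0:ℝ) ≤ 2), Real.rpow_natCast, hr]
      calc ∑ u ∈ t.filter (fun u => lvl u = j), f u
          ≤ (t.filter (fun u => lvl u = j)).card • ((V / D) ^ (κ+ε) * ((j:ℝ)+1)^k) :=
            Finset.sum_le_card_nsmul _ _ _ helem
        _ = ((t.filter (fun u => lvl u = j)).card : ℝ) * ((V / D) ^ (κ+ε) * ((j:ℝ)+1)^k) :=
            nsmul_eq_mul _ _
        _ ≤ (c * (2*D)^κ) * ((V / D) ^ (κ+ε) * ((j:ℝ)+1)^k) :=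
            mul_le_mul_of_nonneg_right hcard hgmaxnn
        _ = c * (2:ℝ)^κ * V ^ (κ+ε) * (((j:ℝ)+1)^k * r^j) := by
            rw [div_eq_iff (ne_of_gt hDκε)] at hDr
            rw [Real.mul_rpow (by norm_num : (0:ℝ) ≤ 2) hD0.le,
              Real.div_rpow hV0.le hD0.le, hDr]
            field_simp
    calc ∑ u ∈ t, f u
        = ∑ j ∈ t.image lvl, ∑ u ∈ t.filter (fun u => lvl u = j), f u :=
          (Finset.sum_fiberwise_of_maps_to (fun u hu => Finset.mem_image_of_mem lvl hu) f).symm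
      _ ≤ ∑ j ∈ t.image lvl, c * (2:ℝ)^κ * V ^ (κ+ε) * (((j:ℝ)+1)^k * r^j) :=
          Finset.sum_le_sum fun j _ => hfib j
      _ = c * (2:ℝ)^κ * V ^ (κ+ε) * ∑ j ∈ t.image lvl, ((j:ℝ)+1)^k * r^j := by
          rw [← Finset.mul_sum]
      _ ≤ c * (2:ℝ)^κ * V ^ (κ+ε) * T := by
          apply mul_le_mul_of_nonneg_left
            (Summable.sum_le_tsum _ (fun j _ => hTnonneg j) hsumr)
            (by positivity)
      _ = c * (2:ℝ)^κ * T * max 1 (Y ^ (κ+ε)) := by rw [← hVmax]; ring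
  have hsummable : Summable f := summable_of_sum_le hf0 key
  exact ⟨hsummable, Summable.tsum_le_of_sum_le hsummable key⟩
end
end

section
/- Let n ≥ 2 and let F ∈ ℤ[Y,X₁,…,Xₙ] be an absolutely irreducible polynomial (irreducible in ℚ̄[Y,X₁,…,Xₙ]) that is monic in Y with deg_Y F ≥ 2, and let L_F := ℚ(X₁,…,Xₙ)[Y]/(F). Then F is a strongly n-genuine polynomial if and only if for every j ∈ {1,…,n}, every element of L_F that is algebraic over the subfield ℚ((X_i)_{i≠j}) already lies in ℚ((X_i)_{i≠j}). -/
open Polynomial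

noncomputable section

namespace S9

variable {n : ℕ}

lemma degOf_zero_coeff {j : Fin n} {c : MvPolynomial (Fin n) ℚ}
    (hc : MvPolynomial.degreeOf j c = 0) {m : Fin n →₀ ℕ} (hm : m j ≠ 0) :
    MvPolynomial.coeff m c = 0 := by
  by_contra hne
  have hmem : m ∈ c.support := MvPolynomial.mem_support_iff.mpr hne
  have := (MvPolynomial.degreeOf_le_iff.mp (le_of_eq hc)) m hmem
  omega

/-- Expansion in powers of `X j` with `X j`-free coefficients is unique. -/
lemma indep (j : Fin n) (N : ℕ) (c : ℕ → MvPolynomial (Fin n) ℚ)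
    (hc : ∀ k, MvPolynomial.degreeOf j (c k) = 0)
    (h : ∑ k ∈ Finset.range N, c k * MvPolynomial.X j ^ k = 0) :
    ∀ k ∈ Finset.range N, c k = 0 := by
  intro k hk
  ext m'
  rw [MvPolynomial.coeff_zero]
  by_cases hmj : m' j ≠ 0
  · exact degOf_zero_coeff (hc k) hmj
  push_neg at hmj
  have hco := congrArg (MvPolynomial.coeff (m' + Finsupp.single j k)) h
  rw [MvPolynomial.coeff_zero, MvPolynomial.coeff_sum] at hco
  rw [Finset.sum_eq_single k] at hco
  · rw [MvPolynomial.X_pow_eq_monomial, MvPolynomial.coeff_mul_monomial'] at hco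
    rw [if_pos (Finsupp.single_le_iff.mpr (by simp [hmj]))] at hco
    rwa [add_tsub_cancel_right, mul_one] at hco
  · intro i _ hik
    rw [MvPolynomial.X_pow_eq_monomial, MvPolynomial.coeff_mul_monomial']
    rcases lt_or_gt_of_ne hik with hlt | hgt
    · rw [if_pos (Finsupp.single_le_iff.mpr (by simp; omega))]
      rw [mul_one]
      apply degOf_zero_coeff (hc i)
      rw [Finsupp.tsub_apply, Finsupp.add_apply, Finsupp.single_apply, Finsupp.single_apply]
      simp [hmj]; omega
    · rw [if_neg]
      rw [Finsupp.single_le_iff, Finsupp.add_apply, Finsupp.single_apply]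
      simp [hmj]; omega
  · intro hknotin; exact absurd hk hknotin

end S9
namespace S9

variable {n : ℕ}

/-- Iso writing a multivariate polynomial as polynomial in `X j`. -/
def rho (j : Fin n) :
    MvPolynomial (Fin n) ℚ ≃ₐ[ℚ] Polynomial (MvPolynomial {i : Fin n // i ≠ j} ℚ) :=
  (MvPolynomial.renameEquiv ℚ (Equiv.optionSubtypeNe j).symm).trans
    (MvPolynomial.optionEquivLeft ℚ {i : Fin n // i ≠ j})

def emb (j : Fin n) : MvPolynomial {i : Fin n // i ≠ j} ℚ →+* MvPolynomial (Fin n) ℚ :=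
  (MvPolynomial.rename (Subtype.val : {i : Fin n // i ≠ j} → Fin n)).toRingHom

/-- Write `P` as a polynomial in `X j` whose coefficients do not involve `X j`. -/
def decomp (j : Fin n) (P : MvPolynomial (Fin n) ℚ) : Polynomial (MvPolynomial (Fin n) ℚ) :=
  (rho j P).map (emb j)

lemma degreeOf_emb (j : Fin n) (q : MvPolynomial {i : Fin n // i ≠ j} ℚ) :
    MvPolynomial.degreeOf j (emb j q) = 0 := by
  refine Nat.le_zero.mp (MvPolynomial.degreeOf_le_iff.mpr ?_)
  intro m hm
  rw [emb, AlgHom.toRingHom_eq_coe, AlgHom.coe_toRingHom,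
    MvPolynomial.support_rename_of_injective Subtype.val_injective] at hm
  obtain ⟨m₀, _, rfl⟩ := Finset.mem_image.mp hm
  have h0 : Finsupp.mapDomain (Subtype.val : {i : Fin n // i ≠ j} → Fin n) m₀ j = 0 :=
    Finsupp.mapDomain_notin_range m₀ j (by rintro ⟨⟨i, hi⟩, h⟩; exact hi h)
  exact le_of_eq h0

lemma degreeOf_decomp (j : Fin n) (P : MvPolynomial (Fin n) ℚ) (k : ℕ) :
    MvPolynomial.degreeOf j ((decomp j P).coeff k) = 0 := by
  rw [decomp, Polynomial.coeff_map]
  exact degreeOf_emb j _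

lemma eval_decomp (j : Fin n) (P : MvPolynomial (Fin n) ℚ) :
    Polynomial.eval (MvPolynomial.X j) (decomp j P) = P := by
  have key : (Polynomial.eval₂RingHom (emb j) (MvPolynomial.X j)).comp
      (rho j).toAlgHom.toRingHom =
      RingHom.id (MvPolynomial (Fin n) ℚ) := by
    apply MvPolynomial.ringHom_ext
    · intro r
      simp only [RingHom.comp_apply, RingHom.coe_coe, RingHom.id_apply,
        AlgHom.toRingHom_eq_coe, AlgHom.coe_coe, AlgEquiv.coe_algHom, Polynomial.coe_eval₂RingHom]
      have : (rho j) (MvPolynomial.C r) = Polynomial.C (MvPolynomial.C r) := by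
        simp [rho, MvPolynomial.optionEquivLeft_C]
      rw [this]
      simp [emb]
    · intro i
      simp only [RingHom.comp_apply, RingHom.coe_coe, RingHom.id_apply,
        AlgHom.toRingHom_eq_coe, AlgHom.coe_coe, AlgEquiv.coe_algHom, Polynomial.coe_eval₂RingHom]
      by_cases hij : i = j
      · have : (rho j) (MvPolynomial.X i) = Polynomial.X := by
          subst hij; simp [rho]
        rw [this, Polynomial.eval₂_X]
        exact congrArg MvPolynomial.X hij.symm
      · have : (rho j) (MvPolynomial.X i) =
            Polynomial.C (MvPolynomial.X (⟨i, hij⟩ : {i' : Fin n // i' ≠ j})) := by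
          simp [rho, hij]
        rw [this, Polynomial.eval₂_C]
        simp [emb]
  have h2 := RingHom.congr_fun key P
  simp only [RingHom.comp_apply, RingHom.id_apply, AlgHom.toRingHom_eq_coe,
    RingHom.coe_coe, AlgHom.coe_coe, AlgEquiv.coe_algHom, Polynomial.coe_eval₂RingHom] at h2
  rw [decomp, Polynomial.eval_map]
  convert h2 using 2

end S9
set_option synthInstance.maxHeartbeats 1000000
set_option maxHeartbeats 1600000

namespace S9

variable {n : ℕ}

lemma degreeOf_mul_zero {j : Fin n} {a b : MvPolynomial (Fin n) ℚ}
    (ha : MvPolynomial.degreeOf j a = 0) (hb : MvPolynomial.degreeOf j b = 0) :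
    MvPolynomial.degreeOf j (a * b) = 0 :=
  Nat.le_zero.mp ((MvPolynomial.degreeOf_mul_le j a b).trans (by rw [ha, hb]))

lemma degreeOf_one_zero (j : Fin n) : MvPolynomial.degreeOf j (1 : MvPolynomial (Fin n) ℚ) = 0 := by
  rw [← MvPolynomial.C_1]; exact MvPolynomial.degreeOf_C 1 j

lemma degreeOf_neg_zero {j : Fin n} {a : MvPolynomial (Fin n) ℚ}
    (ha : MvPolynomial.degreeOf j a = 0) : MvPolynomial.degreeOf j (-a) = 0 := by
  have : -a = MvPolynomial.C (-1 : ℚ) * a := by rw [map_neg, map_one]; ring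
  rw [this]
  exact degreeOf_mul_zero (MvPolynomial.degreeOf_C _ _) ha

lemma degreeOf_add_zero {j : Fin n} {a b : MvPolynomial (Fin n) ℚ}
    (ha : MvPolynomial.degreeOf j a = 0) (hb : MvPolynomial.degreeOf j b = 0) :
    MvPolynomial.degreeOf j (a + b) = 0 :=
  Nat.le_zero.mp ((MvPolynomial.degreeOf_add_le j a b).trans (by rw [ha, hb]; exact le_rfl))

/-- The canonical map `ℚ[X₁,…,Xₙ] → ℚ(X)`. -/
abbrev phi (n : ℕ) : MvPolynomial (Fin n) ℚ →+* RF n :=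
  algebraMap (MvPolynomial (Fin n) ℚ) (RF n)

lemma phi_inj : Function.Injective (phi n) :=
  IsFractionRing.injective (MvPolynomial (Fin n) ℚ) (RF n)

/-- The subfield `ℚ((Xᵢ)_{i ≠ j})` of `ℚ(X₁,…,Xₙ)`. -/
def Ej (n : ℕ) (j : Fin n) : Subfield (RF n) where
  carrier := {r | ∃ a b : MvPolynomial (Fin n) ℚ,
    MvPolynomial.degreeOf j a = 0 ∧ MvPolynomial.degreeOf j b = 0 ∧
    phi n b ≠ 0 ∧ r * phi n b = phi n a}
  mul_mem' := by
    rintro x y ⟨a, b, ha, hb, hb0, hx⟩ ⟨c, d, hc, hd, hd0, hy⟩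
    refine ⟨a * c, b * d, degreeOf_mul_zero ha hc, degreeOf_mul_zero hb hd, ?_, ?_⟩
    · rw [map_mul]; exact mul_ne_zero hb0 hd0
    · rw [map_mul, map_mul]
      calc x * y * (phi n b * phi n d) = (x * phi n b) * (y * phi n d) := by ring
      _ = phi n a * phi n c := by rw [hx, hy]
  one_mem' := ⟨1, 1, degreeOf_one_zero j, degreeOf_one_zero j, by simp, by simp⟩
  add_mem' := by
    rintro x y ⟨a, b, ha, hb, hb0, hx⟩ ⟨c, d, hc, hd, hd0, hy⟩
    refine ⟨a * d + c * b, b * d,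
      degreeOf_add_zero (degreeOf_mul_zero ha hd) (degreeOf_mul_zero hc hb),
      degreeOf_mul_zero hb hd, ?_, ?_⟩
    · rw [map_mul]; exact mul_ne_zero hb0 hd0
    · rw [map_add, map_mul, map_mul, map_mul]
      calc (x + y) * (phi n b * phi n d)
          = (x * phi n b) * phi n d + (y * phi n d) * phi n b := by ring
      _ = phi n a * phi n d + phi n c * phi n b := by rw [hx, hy]
  zero_mem' := ⟨0, 1, by rw [← MvPolynomial.C_0]; exact MvPolynomial.degreeOf_C 0 j,
    degreeOf_one_zero j, by simp, by simp⟩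
  neg_mem' := by
    rintro x ⟨a, b, ha, hb, hb0, hx⟩
    exact ⟨-a, b, degreeOf_neg_zero ha, hb, hb0, by rw [map_neg, ← hx]; ring⟩
  inv_mem' := by
    intro x ⟨a, b, ha, hb, hb0, hx⟩
    by_cases hx0 : x = 0
    · exact ⟨0, 1, by rw [← MvPolynomial.C_0]; exact MvPolynomial.degreeOf_C 0 j,
        degreeOf_one_zero j, by simp, by simp [hx0]⟩
    · have ha0 : phi n a ≠ 0 := by rw [← hx]; exact mul_ne_zero hx0 hb0
      refine ⟨b, a, hb, ha, ha0, ?_⟩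
      field_simp
      rw [hx]

lemma mem_Ej_iff {j : Fin n} {r : RF n} : r ∈ Ej n j ↔
    ∃ a b : MvPolynomial (Fin n) ℚ,
      MvPolynomial.degreeOf j a = 0 ∧ MvPolynomial.degreeOf j b = 0 ∧
      phi n b ≠ 0 ∧ r * phi n b = phi n a := Iff.rfl

lemma phi_mem_Ej {j : Fin n} {a : MvPolynomial (Fin n) ℚ}
    (ha : MvPolynomial.degreeOf j a = 0) : phi n a ∈ Ej n j :=
  ⟨a, 1, ha, degreeOf_one_zero j, by simp, by simp⟩

lemma mem_Ej_range {j : Fin n} {r : RF n} :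
    r ∈ Set.range (algebraMap (Ej n j) (RF n)) ↔ r ∈ Ej n j := by
  constructor
  · rintro ⟨y, rfl⟩; exact y.2
  · intro hr; exact ⟨⟨r, hr⟩, rfl⟩

end S9
namespace S9

variable {n : ℕ}

lemma exists_lift {A B : Type*} [Semiring A] [Semiring B] (f : A →+* B)
    (p : Polynomial B) (h : ∀ k, p.coeff k ∈ Set.range f) :
    ∃ q : Polynomial A, q.map f = p :=
  (Polynomial.mem_lifts p).mp ((Polynomial.lifts_iff_coeff_lifts p).mpr h)

lemma isAlgebraic_of_poly {A B : Type*} [Field A] [Field B] [Algebra A B]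
    (w : B) (p : Polynomial B) (h0 : p ≠ 0)
    (hc : ∀ k, p.coeff k ∈ Set.range (algebraMap A B))
    (he : Polynomial.eval w p = 0) : IsAlgebraic A w := by
  obtain ⟨q, hq⟩ := exists_lift (algebraMap A B) p hc
  refine ⟨q, fun hq0 => h0 (by rw [← hq, hq0, Polynomial.map_zero]), ?_⟩
  rw [Polynomial.aeval_def, ← Polynomial.eval_map, hq]
  exact he

lemma degreeOf_prod_zero {ι : Type*} {j : Fin n} {s : Finset ι}
    {f : ι → MvPolynomial (Fin n) ℚ}
    (h : ∀ i ∈ s, MvPolynomial.degreeOf j (f i) = 0) :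
    MvPolynomial.degreeOf j (∏ i ∈ s, f i) = 0 := by
  classical
  induction s using Finset.induction with
  | empty => simpa using degreeOf_one_zero j
  | @insert x s hx ih =>
    rw [Finset.prod_insert hx]
    exact degreeOf_mul_zero (h x (Finset.mem_insert_self x s))
      (ih fun i hi => h i (Finset.mem_insert_of_mem hi))

/-- No nonzero polynomial with coefficients in `Ej` vanishes at `X j`. -/
lemma eval_Xj_eq_zero {j : Fin n} (p : Polynomial (RF n))
    (hc : ∀ k, p.coeff k ∈ Ej n j)
    (he : Polynomial.eval (phi n (MvPolynomial.X j)) p = 0) : p = 0 := by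
  classical
  set N := p.natDegree + 1 with hN
  choose a b ha hb hb0 hab using fun k => (mem_Ej_iff.mp (hc k))
  have hbne : ∀ k, b k ≠ 0 := fun k h0 => (hb0 k) (by rw [h0, map_zero])
  set c : ℕ → MvPolynomial (Fin n) ℚ :=
    fun k => a k * ∏ l ∈ (Finset.range N).erase k, b l with hcdef
  have key : phi n (∑ k ∈ Finset.range N, c k * MvPolynomial.X j ^ k) = 0 := by
    rw [map_sum]
    have hterm : ∀ k ∈ Finset.range N,
        phi n (c k * MvPolynomial.X j ^ k)
        = (p.coeff k * phi n (MvPolynomial.X j) ^ k) *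
          phi n (∏ l ∈ Finset.range N, b l) := by
      intro k hk
      rw [hcdef, map_mul, map_mul, map_pow,
        ← Finset.prod_erase_mul _ _ hk, map_mul, ← hab k]
      ring
    rw [Finset.sum_congr rfl hterm, ← Finset.sum_mul]
    have hsum : ∑ k ∈ Finset.range N, p.coeff k * phi n (MvPolynomial.X j) ^ k
        = Polynomial.eval (phi n (MvPolynomial.X j)) p :=
      (Polynomial.eval_eq_sum_range _).symm
    rw [hsum, he, zero_mul]
  rw [← map_zero (phi n)] at key
  have hall := indep j N c
    (fun k => degreeOf_mul_zero (ha k) (degreeOf_prod_zero fun l _ => hb l))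
    (phi_inj key)
  ext k
  rw [Polynomial.coeff_zero]
  by_cases hk : k < N
  · have hc0 := hall k (Finset.mem_range.mpr hk)
    have hprodne : (∏ l ∈ (Finset.range N).erase k, b l) ≠ 0 :=
      Finset.prod_ne_zero_iff.mpr fun l _ => hbne l
    have ha0 : a k = 0 := by
      rcases mul_eq_zero.mp (hcdef ▸ hc0) with h | h
      · exact h
      · exact absurd h hprodne
    have : p.coeff k * phi n (b k) = 0 := by rw [hab k, ha0, map_zero]
    rcases mul_eq_zero.mp this with h | h
    · exact h
    · exact absurd h (hb0 k)
  · exact Polynomial.coeff_eq_zero_of_natDegree_lt (by omega)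

/-- Every element of `ℚ(X)` is a ratio of polynomials in `X j` with `Ej` coefficients. -/
lemma exists_fraction {j : Fin n} (r : RF n) :
    ∃ A B : Polynomial (RF n), (∀ k, A.coeff k ∈ Ej n j) ∧ (∀ k, B.coeff k ∈ Ej n j) ∧
      Polynomial.eval (phi n (MvPolynomial.X j)) B ≠ 0 ∧
      r * Polynomial.eval (phi n (MvPolynomial.X j)) B
        = Polynomial.eval (phi n (MvPolynomial.X j)) A := by
  obtain ⟨P, Q, hQ, hPQ⟩ := IsFractionRing.div_surjective (A := MvPolynomial (Fin n) ℚ) r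
  have hQ0 : phi n Q ≠ 0 := fun h =>
    nonZeroDivisors.ne_zero hQ (phi_inj (by rw [h, map_zero]))
  have heval : ∀ S : MvPolynomial (Fin n) ℚ,
      Polynomial.eval (phi n (MvPolynomial.X j)) ((decomp j S).map (phi n)) = phi n S := by
    intro S
    rw [Polynomial.eval_map, Polynomial.eval₂_at_apply, eval_decomp]
  refine ⟨(decomp j P).map (phi n), (decomp j Q).map (phi n), ?_, ?_, ?_, ?_⟩
  · intro k; rw [Polynomial.coeff_map]; exact phi_mem_Ej (degreeOf_decomp j P k)
  · intro k; rw [Polynomial.coeff_map]; exact phi_mem_Ej (degreeOf_decomp j Q k)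
  · rw [heval]; exact hQ0
  · rw [heval, heval, ← hPQ]; field_simp

/-- `ℚ((Xᵢ)_{i≠j})` is algebraically closed in `ℚ(X)`. -/
lemma Ej_algClosed {j : Fin n} (w : RF n) (hw : IsAlgebraic (Ej n j) w) : w ∈ Ej n j := by
  classical
  set x := phi n (MvPolynomial.X j) with hx
  obtain ⟨A, B, hA, hB, hBx, hABx⟩ := exists_fraction (j := j) w
  set q := A - Polynomial.C w * B with hq
  have hqe : Polynomial.eval x q = 0 := by
    rw [hq, Polynomial.eval_sub, Polynomial.eval_mul, Polynomial.eval_C, ← hABx, sub_self]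
  by_cases hq0 : q = 0
  · have hAB : A = Polynomial.C w * B := by
      have := hq ▸ hq0; rwa [sub_eq_zero] at this
    have hBne : B ≠ 0 := fun h => hBx (by rw [h, Polynomial.eval_zero])
    have hexk : ∃ k, B.coeff k ≠ 0 := by
      by_contra hall; push_neg at hall
      exact hBne (Polynomial.ext fun k => by rw [hall k, Polynomial.coeff_zero])
    obtain ⟨k, hk⟩ := hexk
    have hwk : w * B.coeff k = A.coeff k := by
      have := congrArg (fun p => p.coeff k) hAB
      simpa [Polynomial.coeff_C_mul] using this.symm
    have : w = A.coeff k * (B.coeff k)⁻¹ := by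
      field_simp [← hwk]
      exact hwk
    rw [this]
    exact mul_mem (hA k) (inv_mem (hB k))
  · exfalso
    set E := Ej n j with hE
    set Fw : IntermediateField E (RF n) := IntermediateField.adjoin E {w} with hFw
    haveI : FiniteDimensional E Fw := IntermediateField.adjoin.finiteDimensional hw.isIntegral
    haveI : Algebra.IsIntegral E Fw := Algebra.IsIntegral.of_finite E Fw
    have hwF : w ∈ Fw := IntermediateField.mem_adjoin_simple_self E w
    have hcq : ∀ k, q.coeff k ∈ Set.range (algebraMap Fw (RF n)) := by
      intro k
      have hmem : q.coeff k ∈ Fw := by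
        rw [hq, Polynomial.coeff_sub, Polynomial.coeff_C_mul]
        refine sub_mem ?_ (mul_mem hwF ?_)
        · exact Fw.algebraMap_mem ⟨A.coeff k, hA k⟩
        · exact Fw.algebraMap_mem ⟨B.coeff k, hB k⟩
      exact ⟨⟨q.coeff k, hmem⟩, rfl⟩
    have hxa : IsAlgebraic Fw x := isAlgebraic_of_poly x q hq0 hcq hqe
    have hxE : IsIntegral E x := isIntegral_trans x hxa.isIntegral
    have hmp := minpoly.ne_zero hxE
    set m := (minpoly E x).map (algebraMap E (RF n)) with hm
    have hm0 : m = 0 := by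
      refine eval_Xj_eq_zero (j := j) m (fun k => ?_) ?_
      · rw [hm, Polynomial.coeff_map]
        exact ((minpoly E x).coeff k).2
      · rw [hm, Polynomial.eval_map, ← Polynomial.aeval_def]
        exact minpoly.aeval E x
    exact hmp ((Polynomial.map_eq_zero_iff (algebraMap E (RF n)).injective).mp hm0)

end S9
namespace S9

variable {n : ℕ}

lemma toQ_monic {F : Polynomial (MvPolynomial (Fin n) ℤ)} (hmon : F.Monic) : (toQ F).Monic :=
  hmon.map _

lemma irreducible_toQ {F : Polynomial (MvPolynomial (Fin n) ℤ)} (habs : AbsIrred F)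
    (hmon : F.Monic) : Irreducible (toQ F) := by
  apply Polynomial.Monic.irreducible_of_irreducible_map
    (MvPolynomial.map (algebraMap ℚ (AlgebraicClosure ℚ))) (toQ F) (toQ_monic hmon)
  have hcomp : (MvPolynomial.map (σ := Fin n) (algebraMap ℚ (AlgebraicClosure ℚ))).comp
      (MvPolynomial.map (Int.castRingHom ℚ))
      = MvPolynomial.map (Int.castRingHom (AlgebraicClosure ℚ)) := by
    apply RingHom.ext; intro p
    rw [RingHom.comp_apply, MvPolynomial.map_map]
    have : (algebraMap ℚ (AlgebraicClosure ℚ)).comp (Int.castRingHom ℚ)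
        = Int.castRingHom (AlgebraicClosure ℚ) := Subsingleton.elim _ _
    rw [this]
  have : (toQ F).map (MvPolynomial.map (algebraMap ℚ (AlgebraicClosure ℚ)))
      = F.map (MvPolynomial.map (Int.castRingHom (AlgebraicClosure ℚ))) := by
    rw [toQ, Polynomial.map_map, hcomp]
  rw [this]
  exact habs

lemma irreducible_toFrac {F : Polynomial (MvPolynomial (Fin n) ℤ)} (habs : AbsIrred F)
    (hmon : F.Monic) : Irreducible (toFrac F) := by
  rw [toFrac, toFracQ]
  exact ((toQ_monic hmon).irreducible_iff_irreducible_map_fraction_map).mp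
    (irreducible_toQ habs hmon)

lemma structMap_eq (F : Polynomial (MvPolynomial (Fin n) ℤ)) (a : MvPolynomial (Fin n) ℚ) :
    structMap F a = algebraMap (RF n) (AdjoinRoot (toFrac F)) (phi n a) := rfl

lemma coordMem_iff {F : Polynomial (MvPolynomial (Fin n) ℤ)} [Fact (Irreducible (toFrac F))]
    {j : Fin n} {z : AdjoinRoot (toFrac F)} :
    CoordMem j F z ↔ ∃ r : RF n, r ∈ Ej n j ∧
      z = algebraMap (RF n) (AdjoinRoot (toFrac F)) r := by
  have hinj : Function.Injective (algebraMap (RF n) (AdjoinRoot (toFrac F))) :=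
    (algebraMap (RF n) (AdjoinRoot (toFrac F))).injective
  constructor
  · rintro ⟨a, b, ha, hb, hsb, hz⟩
    rw [structMap_eq] at hsb hz
    rw [structMap_eq] at hz
    have hφb : phi n b ≠ 0 := fun h => hsb (by rw [h, map_zero])
    refine ⟨phi n a / phi n b, ⟨a, b, ha, hb, hφb, div_mul_cancel₀ _ hφb⟩, ?_⟩
    rw [map_div₀]
    rw [eq_div_iff hsb]
    exact hz
  · rintro ⟨r, ⟨a, b, ha, hb, hφb, hr⟩, rfl⟩
    refine ⟨a, b, ha, hb, ?_, ?_⟩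
    · rw [structMap_eq]
      exact fun h => hφb (hinj (by rw [h, map_zero]))
    · rw [structMap_eq, structMap_eq, ← map_mul, hr]

end S9
namespace S9

variable {n : ℕ}

lemma bwd (F : Polynomial (MvPolynomial (Fin n) ℤ)) (habs : AbsIrred F) (hmon : F.Monic)
    (hrt : ∀ j : Fin n, ∀ z : AdjoinRoot (toFrac F), AlgOverCoord j F z → CoordMem j F z) :
    IsStronglyGenuinePoly F := by
  haveI : Fact (Irreducible (toFrac F)) := ⟨irreducible_toFrac habs hmon⟩
  refine ⟨habs, ?_⟩
  rintro M _ _ ⟨e⟩ M' hM' G hGirr ⟨g⟩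
  have e' : AdjoinRoot (toFrac F) ≃ₐ[RF n] M := e
  constructor
  · by_contra h0
    push_neg at h0
    obtain ⟨g0, hg0⟩ := Polynomial.natDegree_eq_zero.mp (Nat.le_zero.mp h0)
    rw [← hg0] at hGirr
    have hC : toFrac (Polynomial.C g0)
        = Polynomial.C (phi n (MvPolynomial.map (Int.castRingHom ℚ) g0)) := by
      rw [toFrac, toQ, toFracQ, Polynomial.map_C, Polynomial.map_C]
    rw [hC] at hGirr
    rcases eq_or_ne (phi n (MvPolynomial.map (Int.castRingHom ℚ) g0)) 0 with h | h
    · rw [h, Polynomial.C_0] at hGirr; exact not_irreducible_zero hGirr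
    · exact hGirr.not_isUnit (Polynomial.isUnit_C.mpr (Ne.isUnit h))
  · intro i
    by_contra hdeg
    push_neg at hdeg
    have hdeg0 : degX G i = 0 := Nat.le_zero.mp hdeg
    set L := AdjoinRoot (toFrac F) with hL
    set h2 : AdjoinRoot (toFrac G) →ₐ[RF n] L :=
      e'.symm.toAlgHom.comp (M'.val.comp g.toAlgHom) with hh2
    set z := h2 (AdjoinRoot.root (toFrac G)) with hzdef
    have hzero : Polynomial.aeval z (toFrac G) = 0 := by
      rw [hzdef, Polynomial.aeval_algHom_apply, AdjoinRoot.aeval_eq, AdjoinRoot.mk_self,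
        map_zero]
    have halg : AlgOverCoord i F z := by
      refine ⟨(toFrac G).map (algebraMap (RF n) L), ?_, ?_, ?_⟩
      · rw [Ne, Polynomial.map_eq_zero_iff (algebraMap (RF n) L).injective]
        exact hGirr.ne_zero
      · intro k
        refine ⟨(toQ G).coeff k, 1, ?_, degreeOf_one_zero i, ?_, ?_⟩
        · refine Nat.le_zero.mp (MvPolynomial.degreeOf_le_iff.mpr ?_)
          intro m hm
          rw [toQ, Polynomial.coeff_map] at hm
          have hm' := MvPolynomial.support_map_subset _ _ hm
          by_cases hks : k ∈ G.support
          · have hle : MvPolynomial.degreeOf i (G.coeff k) ≤ degX G i :=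
              Finset.le_sup (f := fun k => MvPolynomial.degreeOf i (G.coeff k)) hks
            rw [hdeg0, Nat.le_zero] at hle
            exact (MvPolynomial.degreeOf_le_iff.mp (le_of_eq hle)) m hm'
          · rw [Polynomial.notMem_support_iff.mp hks] at hm'
            simp at hm'
        · rw [map_one]; exact one_ne_zero
        · rw [map_one, mul_one, Polynomial.coeff_map, structMap_eq]
          congr 1
          rw [toFrac, toFracQ, Polynomial.coeff_map]
      · rw [Polynomial.eval_map, ← Polynomial.aeval_def]
        exact hzero
    obtain ⟨r, _, hzr⟩ := coordMem_iff.mp (hrt i z halg)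
    apply hM'
    have hθ : (g (AdjoinRoot.root (toFrac G)) : M) = e' z := by
      rw [hzdef, hh2]; simp
    have hθ' : g (AdjoinRoot.root (toFrac G)) = algebraMap (RF n) M' r := by
      apply Subtype.val_injective
      rw [hθ, hzr]
      have h1 : e' (algebraMap (RF n) L r) = algebraMap (RF n) M r := e'.commutes r
      rw [h1, IsScalarTower.algebraMap_apply (RF n) M' M r,
        IntermediateField.algebraMap_apply]
    have hle : M' ≤ ⊥ := by
      intro m hm
      obtain ⟨x, hx⟩ := g.surjective ⟨m, hm⟩
      obtain ⟨q, rfl⟩ := AdjoinRoot.mk_surjective x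
      rw [IntermediateField.mem_bot]
      refine ⟨Polynomial.eval r q, ?_⟩
      have hsub : (⟨m, hm⟩ : M') = algebraMap (RF n) M' (Polynomial.eval r q) := by
        rw [← hx, ← AdjoinRoot.aeval_eq, ← Polynomial.aeval_algHom_apply, hθ',
          Polynomial.aeval_algebraMap_apply, Polynomial.coe_aeval_eq_eval]
      have := congrArg (Subtype.val) hsub
      rw [IsScalarTower.algebraMap_apply (RF n) M' M, IntermediateField.algebraMap_apply]
      exact this.symm
    exact le_antisymm hle bot_le

end S9
namespace S9

variable {n : ℕ}

/-- Clear denominators of a rational multivariate polynomial (numerators). -/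
def intify (c : MvPolynomial (Fin n) ℚ) : MvPolynomial (Fin n) ℤ :=
  ∑ m ∈ c.support, MvPolynomial.monomial m (c.coeff m).num

lemma coeff_intify (c : MvPolynomial (Fin n) ℚ) (m : Fin n →₀ ℕ) :
    MvPolynomial.coeff m (intify c)
      = if m ∈ c.support then (c.coeff m).num else 0 := by
  classical
  rw [intify, MvPolynomial.coeff_sum]
  rw [Finset.sum_congr rfl (fun m' _ => MvPolynomial.coeff_monomial m m' _)]
  rw [Finset.sum_ite_eq' c.support m]

lemma degreeOf_intify_zero {j : Fin n} {c : MvPolynomial (Fin n) ℚ}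
    (h : MvPolynomial.degreeOf j c = 0) :
    MvPolynomial.degreeOf j (intify c) = 0 := by
  refine Nat.le_zero.mp (MvPolynomial.degreeOf_le_iff.mpr ?_)
  intro m hm
  have hne := MvPolynomial.mem_support_iff.mp hm
  rw [coeff_intify] at hne
  by_cases hmc : m ∈ c.support
  · exact (MvPolynomial.degreeOf_le_iff.mp (le_of_eq h)) m hmc
  · rw [if_neg hmc] at hne; exact absurd rfl hne

lemma map_intify (c : MvPolynomial (Fin n) ℚ)
    (h : ∀ m, IsLocalization.IsInteger ℤ (c.coeff m)) :
    MvPolynomial.map (Int.castRingHom ℚ) (intify c) = c := by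
  apply MvPolynomial.ext
  intro m
  rw [MvPolynomial.coeff_map, coeff_intify]
  by_cases hm : m ∈ c.support
  · rw [if_pos hm]
    obtain ⟨v, hv⟩ := h m
    have : (c.coeff m).num = v := by rw [← hv]; exact Rat.num_intCast v
    rw [this, ← hv]
    simp
  · rw [if_neg hm, MvPolynomial.notMem_support_iff.mp hm]
    simp

/-- Coefficients of the minimal polynomial of a root of an `Ej`-polynomial lie in `Ej`. -/
lemma minpoly_coeff_mem {j : Fin n} {L : Type} [Field L] [Algebra (RF n) L]
    (z : L) (μ : Polynomial (RF n)) (hμm : μ.Monic)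
    (hμc : ∀ k, μ.coeff k ∈ Ej n j) (hμz : Polynomial.aeval z μ = 0) :
    ∀ k, (minpoly (RF n) z).coeff k ∈ Ej n j := by
  have hzint : IsIntegral (RF n) z := ⟨μ, hμm, by rwa [← Polynomial.aeval_def]⟩
  set ν := minpoly (RF n) z with hνdef
  have hνdvd : ν ∣ μ := minpoly.dvd _ _ hμz
  set SF := Polynomial.SplittingField μ with hSF
  obtain ⟨μ', hμ'⟩ := exists_lift (algebraMap (Ej n j) (RF n)) μ
    (fun k => mem_Ej_range.mpr (hμc k))
  have hinj : Function.Injective (algebraMap (Ej n j) (RF n)) :=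
    (algebraMap (Ej n j) (RF n)).injective
  have hμ'm : μ'.Monic := by
    have hdeg : μ'.natDegree = μ.natDegree := by
      rw [← hμ', Polynomial.natDegree_map_eq_of_injective hinj]
    rw [Polynomial.Monic, Polynomial.leadingCoeff, hdeg]
    apply hinj
    rw [map_one]
    have hcc := congrArg (fun p => p.coeff μ.natDegree) hμ'
    simp only [Polynomial.coeff_map] at hcc
    rw [hcc]
    exact hμm
  have hsplit : Polynomial.Splits (ν.map (algebraMap (RF n) SF)) :=
    (Polynomial.SplittingField.splits μ).of_dvd (Polynomial.map_ne_zero hμm.ne_zero)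
      (Polynomial.map_dvd _ hνdvd)
  set νS := ν.map (algebraMap (RF n) SF) with hνS
  have hνSm : νS.Monic := (minpoly.monic hzint).map _
  have hνSsplit : Polynomial.Splits νS :=
    hsplit
  have hprod := hνSsplit.eq_prod_roots_of_monic hνSm
  have hroots : ∀ a ∈ νS.roots, IsIntegral (Ej n j) a := by
    intro a ha
    refine ⟨μ', hμ'm, ?_⟩
    have h1 : Polynomial.eval₂ (algebraMap (Ej n j) SF) a μ'
        = Polynomial.eval a (μ.map (algebraMap (RF n) SF)) :=
      calc Polynomial.eval₂ (algebraMap (Ej n j) SF) a μ'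
          = Polynomial.eval₂ ((algebraMap (RF n) SF).comp (algebraMap (Ej n j) (RF n))) a μ' := by
            rw [IsScalarTower.algebraMap_eq (Ej n j) (RF n) SF]
        _ = Polynomial.eval₂ (algebraMap (RF n) SF) a
              (μ'.map (algebraMap (Ej n j) (RF n))) := (Polynomial.eval₂_map _ _ _).symm
        _ = Polynomial.eval₂ (algebraMap (RF n) SF) a μ := by rw [hμ']
        _ = Polynomial.eval a (μ.map (algebraMap (RF n) SF)) := (Polynomial.eval_map _ _).symm
    rw [h1]
    have hdvdS : νS ∣ μ.map (algebraMap (RF n) SF) := Polynomial.map_dvd _ hνdvd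
    have hroot : Polynomial.eval a νS = 0 := Polynomial.isRoot_of_mem_roots ha
    obtain ⟨t, ht⟩ := hdvdS
    rw [ht, Polynomial.eval_mul, hroot, zero_mul]
  have hlift : νS ∈ Polynomial.lifts (algebraMap (integralClosure (Ej n j) SF) SF) := by
    rw [hprod]
    refine Subsemiring.multiset_prod_mem _ _ ?_
    intro pp hpp
    obtain ⟨a, ha, rfl⟩ := Multiset.mem_map.mp hpp
    have haI : IsIntegral (Ej n j) a := hroots a ha
    have hXa : Polynomial.X - Polynomial.C a
        = Polynomial.X + Polynomial.C (-a) := by rw [map_neg, sub_eq_add_neg]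
    rw [hXa]
    refine Subsemiring.add_mem _ (Polynomial.X_mem_lifts _) ?_
    have : -a = algebraMap (integralClosure (Ej n j) SF) SF ⟨-a, neg_mem haI⟩ := rfl
    rw [this]
    exact Polynomial.C_mem_lifts _ _
  intro k
  have hcoeff : νS.coeff k ∈ Set.range (algebraMap (integralClosure (Ej n j) SF) SF) :=
    (Polynomial.lifts_iff_coeff_lifts νS).mp hlift k
  obtain ⟨t, ht⟩ := hcoeff
  have hint : IsIntegral (Ej n j) (algebraMap (RF n) SF (ν.coeff k)) := by
    rw [show algebraMap (RF n) SF (ν.coeff k) = νS.coeff k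
      from (Polynomial.coeff_map _ _).symm, ← ht]
    exact t.2
  have hint' := (isIntegral_algebraMap_iff
    ((algebraMap (RF n) SF).injective)).mp hint
  exact Ej_algClosed _ hint'.isAlgebraic

end S9
namespace S9

variable {n : ℕ}

lemma coeff_CXsum {S : Type*} [Semiring S] (N : ℕ) (f : ℕ → S) (k : ℕ) :
    (∑ i ∈ Finset.range N, Polynomial.C (f i) * Polynomial.X ^ i).coeff k
      = if k < N then f k else 0 := by
  classical
  rw [Polynomial.finset_sum_coeff]
  have hterm : ∀ i ∈ Finset.range N,
      (Polynomial.C (f i) * Polynomial.X ^ i).coeff k = if k = i then f i else 0 := by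
    intro i _
    rw [Polynomial.coeff_C_mul, Polynomial.coeff_X_pow]
    by_cases h : k = i <;> simp [h]
  rw [Finset.sum_congr rfl hterm, Finset.sum_ite_eq (Finset.range N) k f]
  simp [Finset.mem_range]

lemma fwd (F : Polynomial (MvPolynomial (Fin n) ℤ)) (habs : AbsIrred F) (hmon : F.Monic)
    (hsg : IsStronglyGenuinePoly F) :
    ∀ j : Fin n, ∀ z : AdjoinRoot (toFrac F), AlgOverCoord j F z → CoordMem j F z := by
  classical
  haveI : Fact (Irreducible (toFrac F)) := ⟨irreducible_toFrac habs hmon⟩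
  rintro j z ⟨P, hP0, hPc, hPe⟩
  have hPc' : ∀ k, P.coeff k ∈ Set.range (algebraMap (RF n) (AdjoinRoot (toFrac F))) := fun k => by
    obtain ⟨r, _, hzr⟩ := coordMem_iff.mp (hPc k); exact ⟨r, hzr.symm⟩
  obtain ⟨q, hq⟩ := exists_lift _ P hPc'
  have hq0 : q ≠ 0 := fun h => hP0 (by rw [← hq, h, Polynomial.map_zero])
  have hqc : ∀ k, q.coeff k ∈ Ej n j := by
    intro k
    obtain ⟨r, hr, hzr⟩ := coordMem_iff.mp (hPc k)
    have heq : algebraMap (RF n) (AdjoinRoot (toFrac F)) (q.coeff k) = algebraMap (RF n) (AdjoinRoot (toFrac F)) r := by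
      rw [← Polynomial.coeff_map, hq, hzr]
    rw [(algebraMap (RF n) (AdjoinRoot (toFrac F))).injective heq]
    exact hr
  have hqz : Polynomial.aeval z q = 0 := by
    rw [Polynomial.aeval_def, ← Polynomial.eval_map, hq]; exact hPe
  by_cases hzr : z ∈ Set.range (algebraMap (RF n) (AdjoinRoot (toFrac F)))
  · obtain ⟨r, rfl⟩ := hzr
    have hev : Polynomial.eval r q = 0 := by
      have h1 := hqz
      rw [Polynomial.aeval_def, Polynomial.eval₂_at_apply] at h1
      exact (algebraMap (RF n) (AdjoinRoot (toFrac F))).injective (by rw [h1, map_zero])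
    have halg : IsAlgebraic (Ej n j) r :=
      isAlgebraic_of_poly r q hq0 (fun k => mem_Ej_range.mpr (hqc k)) hev
    exact coordMem_iff.mpr ⟨r, Ej_algClosed r halg, rfl⟩
  · exfalso
    have hlc : q.leadingCoeff ≠ 0 := Polynomial.leadingCoeff_ne_zero.mpr hq0
    set μ := q * Polynomial.C q.leadingCoeff⁻¹ with hμdef
    have hμm : μ.Monic := Polynomial.monic_mul_leadingCoeff_inv hq0
    have hμc : ∀ k, μ.coeff k ∈ Ej n j := by
      intro k
      rw [hμdef, Polynomial.coeff_mul_C]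
      exact mul_mem (hqc k) (inv_mem (hqc q.natDegree))
    have hμz : Polynomial.aeval z μ = 0 := by rw [hμdef, map_mul, hqz, zero_mul]
    have hzint : IsIntegral (RF n) z := ⟨μ, hμm, by rwa [← Polynomial.aeval_def]⟩
    have hνc := minpoly_coeff_mem (j := j) z μ hμm hμc hμz
    set ν := minpoly (RF n) z with hνdef
    set N := ν.natDegree + 1 with hN
    choose a b ha hb hb0 hab using fun k => (mem_Ej_iff.mp (hνc k))
    have hbne : ∀ k, b k ≠ 0 := fun k h0 => (hb0 k) (by rw [h0, map_zero])
    set c : ℕ → MvPolynomial (Fin n) ℚ :=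
      fun k => a k * ∏ l ∈ (Finset.range N).erase k, b l with hcdef
    have hcdeg : ∀ k, MvPolynomial.degreeOf j (c k) = 0 := fun k =>
      degreeOf_mul_zero (ha k) (degreeOf_prod_zero fun l _ => hb l)
    -- common integer denominator
    set s : Finset ℚ := (Finset.range N).biUnion
      (fun k => (c k).support.image fun m => (c k).coeff m) with hsdef
    obtain ⟨den, hden⟩ :=
      IsLocalization.exist_integer_multiples_of_finset (nonZeroDivisors ℤ) s
    set δ : ℚ := ((den : ℤ) : ℚ) with hδdef
    set c' : ℕ → MvPolynomial (Fin n) ℚ := fun k => MvPolynomial.C δ * c k with hc'def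
    have hc'deg : ∀ k, MvPolynomial.degreeOf j (c' k) = 0 := fun k =>
      degreeOf_mul_zero (MvPolynomial.degreeOf_C _ _) (hcdeg k)
    have hcint : ∀ k ∈ Finset.range N, ∀ m, IsLocalization.IsInteger ℤ ((c' k).coeff m) := by
      intro k hk m
      rw [hc'def]
      rw [MvPolynomial.coeff_C_mul]
      by_cases hm : m ∈ (c k).support
      · have hmem : (c k).coeff m ∈ s :=
          Finset.mem_biUnion.mpr ⟨k, hk, Finset.mem_image.mpr ⟨m, hm, rfl⟩⟩
        have h2 := hden _ hmem
        rwa [Algebra.smul_def, eq_intCast] at h2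
      · rw [MvPolynomial.notMem_support_iff.mp hm, mul_zero]
        exact IsLocalization.isInteger_zero
    have hmap : ∀ k ∈ Finset.range N,
        MvPolynomial.map (Int.castRingHom ℚ) (intify (c' k)) = c' k :=
      fun k hk => map_intify _ (hcint k hk)
    set G : Polynomial (MvPolynomial (Fin n) ℤ) :=
      ∑ i ∈ Finset.range N, Polynomial.C (intify (c' i)) * Polynomial.X ^ i with hGdef
    have hGcoeff : ∀ k, G.coeff k = if k < N then intify (c' k) else 0 := fun k =>
      coeff_CXsum N _ k
    set u : RF n := phi n (MvPolynomial.C δ) * phi n (∏ l ∈ Finset.range N, b l) with hudef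
    have hkey : ∀ k ∈ Finset.range N, phi n (c' k) = u * ν.coeff k := by
      intro k hk
      simp only [hc'def, hcdef, hudef]
      rw [← Finset.prod_erase_mul _ _ hk]
      rw [map_mul, map_mul, map_mul, ← hab k]
      ring
    have hGfrac : toFrac G = Polynomial.C u * ν := by
      apply Polynomial.ext
      intro k
      rw [Polynomial.coeff_C_mul, toFrac, toFracQ, toQ, Polynomial.coeff_map,
        Polynomial.coeff_map, hGcoeff]
      by_cases hk : k < N
      · rw [if_pos hk, hmap k (Finset.mem_range.mpr hk)]
        exact hkey k (Finset.mem_range.mpr hk)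
      · rw [if_neg hk]
        have hν0 : ν.coeff k = 0 :=
          Polynomial.coeff_eq_zero_of_natDegree_lt (by omega)
        rw [hν0, mul_zero, map_zero, map_zero]
    have hδ0 : δ ≠ 0 := Int.cast_ne_zero.mpr (nonZeroDivisors.ne_zero den.2)
    have hu0 : u ≠ 0 := by
      rw [hudef]
      apply mul_ne_zero
      · intro h
        have hC0 : MvPolynomial.C δ = (0 : MvPolynomial (Fin n) ℚ) :=
          phi_inj (by rw [h, map_zero])
        exact hδ0 (by
          have h3 := congrArg (MvPolynomial.coeff 0) hC0
          rwa [MvPolynomial.coeff_C, if_pos rfl, MvPolynomial.coeff_zero] at h3)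
      · intro h
        have hprodne : (∏ l ∈ Finset.range N, b l) ≠ 0 :=
          Finset.prod_ne_zero_iff.mpr fun l _ => hbne l
        exact hprodne (phi_inj (by rw [h, map_zero]))
    have hassoc : Associated ν (toFrac G) := by
      rw [hGfrac]
      exact ⟨(Polynomial.isUnit_C.mpr hu0.isUnit).unit, by
        rw [IsUnit.unit_spec]; ring⟩
    have hGirr : Irreducible (toFrac G) :=
      hassoc.irreducible (minpoly.irreducible hzint)
    have hspan : Ideal.span {toFrac G} = Ideal.span {ν} :=
      Ideal.span_singleton_eq_span_singleton.mpr hassoc.symm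
    have e1 : AdjoinRoot (toFrac G) ≃ₐ[RF n] AdjoinRoot ν :=
      Ideal.quotientEquivAlgOfEq (RF n) hspan
    have e2 : AdjoinRoot ν ≃ₐ[RF n]
        (IntermediateField.adjoin (RF n) {z} : IntermediateField (RF n) (AdjoinRoot (toFrac F))) :=
      IntermediateField.adjoinRootEquivAdjoin (RF n) hzint
    have hM'ne : (IntermediateField.adjoin (RF n) {z} : IntermediateField (RF n) (AdjoinRoot (toFrac F))) ≠ ⊥ := by
      rw [Ne, IntermediateField.adjoin_simple_eq_bot_iff, IntermediateField.mem_bot]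
      exact hzr
    have hstr := hsg.2 (AdjoinRoot (toFrac F)) ⟨AlgEquiv.refl⟩
    have hAllPos := hstr _ hM'ne G hGirr ⟨e1.trans e2⟩
    have hdegXG : degX G j = 0 := by
      refine Nat.le_zero.mp (Finset.sup_le ?_)
      intro k _
      rw [hGcoeff]
      by_cases hk : k < N
      · rw [if_pos hk]
        exact le_of_eq (degreeOf_intify_zero (hc'deg k))
      · rw [if_neg hk, ← MvPolynomial.C_0]
        exact le_of_eq (MvPolynomial.degreeOf_C 0 j)
    have := hAllPos.2 j
    rw [hdegXG] at this
    exact lt_irrefl 0 this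

end S9

theorem statement9 (n : ℕ) (hn : 2 ≤ n) (F : Polynomial (MvPolynomial (Fin n) ℤ))
    (habs : AbsIrred F) (hmon : F.Monic) (hdeg : 2 ≤ F.natDegree) :
    IsStronglyGenuinePoly F ↔
      ∀ j : Fin n, ∀ z : AdjoinRoot (toFrac F),
        AlgOverCoord j F z → CoordMem j F z := by
  constructor
  · intro hsg
    exact S9.fwd F habs hmon hsg
  · intro hrt
    exact S9.bwd F habs hmon hrt
end
end

section
/- Let A be an m₁ × m₂ matrix with integer entries, of rank s with s < min{m₁,m₂}, and suppose every entry a_{ij} satisfies |a_{ij}| ≤ M for a real number M ≥ 1. Then there exists a nonzero integer vector b ∈ ℤ^{m₂} with A·b = 0 and max_i |b_i| ≤ C(s)·M^{s}, where C(s) is a constant depending only on s. -/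
open Polynomial

noncomputable section

open Matrix Module

/-- Select `s` columns forming a basis of the column space. -/
lemma exists_col_select {m n s : ℕ} (A : Matrix (Fin m) (Fin n) ℚ) (h : A.rank = s) :
    ∃ c : Fin s → Fin n, Function.Injective c ∧
      LinearIndependent ℚ (fun k => Aᵀ (c k)) ∧
      Submodule.span ℚ (Set.range fun k => Aᵀ (c k)) = Submodule.span ℚ (Set.range Aᵀ) := by
  classical
  obtain ⟨t, hts, hspan, hli⟩ := exists_linearIndependent ℚ (Set.range Aᵀ)
  have htfin : t.Finite := (Set.finite_range Aᵀ).subset hts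
  haveI : Fintype t := htfin.fintype
  have hcard : Fintype.card t = s := by
    have h1 := finrank_span_set_eq_card hli
    rw [hspan] at h1; rw [← h, rank_eq_finrank_span_cols]
    rw [← Set.toFinset_card, ← h1]; rfl
  obtain ⟨e⟩ : Nonempty (Fin s ≃ t) := ⟨(Fintype.equivFinOfCardEq hcard).symm⟩
  have hchoice : ∀ k : Fin s, ∃ j : Fin n, Aᵀ j = (e k : Fin m → ℚ) := fun k => hts (e k).2
  choose c hc using hchoice
  refine ⟨c, ?_, ?_, ?_⟩
  · intro k k' hkk'
    have : (e k : Fin m → ℚ) = (e k' : Fin m → ℚ) := by rw [← hc, ← hc, hkk']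
    exact e.injective (Subtype.ext this)
  · have : (fun k => Aᵀ (c k)) = (fun x : t => (x : Fin m → ℚ)) ∘ e := by
      funext k; exact hc k
    rw [this]
    exact hli.comp e e.injective
  · have : (Set.range fun k => Aᵀ (c k)) = t := by
      ext x
      constructor
      · rintro ⟨k, rfl⟩; simp only [hc]; exact (e k).2
      · intro hx; exact ⟨e.symm ⟨x, hx⟩, by simp only [hc]; simp⟩
    rw [this, hspan]


theorem statement16 (s : ℕ) :
    ∃ C : ℝ, 0 < C ∧
      ∀ (m₁ m₂ : ℕ) (A : Matrix (Fin m₁) (Fin m₂) ℤ) (M : ℝ),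
        1 ≤ M → (A.map (Int.castRingHom ℚ)).rank = s → s < m₁ → s < m₂ →
        (∀ i j, |(A i j : ℝ)| ≤ M) →
        ∃ b : Fin m₂ → ℤ, b ≠ 0 ∧ A.mulVec b = 0 ∧
          ∀ i, |(b i : ℝ)| ≤ C * M ^ s := by
  classical
  refine ⟨(s.factorial : ℝ), by positivity, ?_⟩
  intro m₁ m₂ A M hM hrank hs1 hs2 hbound
  set Aq := A.map (Int.castRingHom ℚ) with hAq
  -- select s rows forming a basis of the row space
  have hrankT : Aqᵀ.rank = s := by rw [rank_transpose]; exact hrank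
  obtain ⟨r, hrinj, hrli, hrspan⟩ := exists_col_select Aqᵀ hrankT
  simp only [Matrix.transpose_transpose] at hrli hrspan
  -- the submatrix of selected rows
  set B := Aq.submatrix r id with hB
  have hBrows : ∀ k, B k = Aq (r k) := fun k => rfl
  have hBrank : B.rank = s := by
    have : LinearIndependent ℚ B := hrli
    exact this.rank_matrix.trans (Fintype.card_fin _)
  -- select s columns of B forming an invertible square submatrix
  obtain ⟨c, hcinj, hcli, -⟩ := exists_col_select B hBrank
  have hSunit : IsUnit (B.submatrix id c) := by
    rw [← Matrix.linearIndependent_cols_iff_isUnit]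
    exact hcli
  -- pick a column not among the selected ones
  have hex : ∃ j₀ : Fin m₂, ∀ l, c l ≠ j₀ := by
    by_contra hcon
    push_neg at hcon
    choose f hf using hcon
    have : Function.Surjective c := fun j => ⟨f j, hf j⟩
    have := Fintype.card_le_of_surjective c this
    simp only [Fintype.card_fin] at this
    omega
  obtain ⟨j₀, hj₀⟩ := hex
  -- the integer square submatrix and the extra column
  set Bz : Matrix (Fin s) (Fin s) ℤ := fun k l => A (r k) (c l) with hBz
  set v : Fin s → ℤ := fun k => A (r k) j₀ with hv
  set w : Fin s → ℤ := Bz.cramer (-v) with hw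
  set b : Fin m₂ → ℤ :=
    fun j => (if j = j₀ then Bz.det else 0) + ∑ l, if c l = j then w l else 0 with hb
  -- the determinant is nonzero
  have hdetcast : ((Bz.det : ℤ) : ℚ) = (B.submatrix id c).det := by
    have : B.submatrix id c = Bz.map (Int.castRingHom ℚ) := by
      ext k l; rfl
    rw [this, ← RingHom.mapMatrix_apply, ← RingHom.map_det]; rfl
  have hdet : Bz.det ≠ 0 := by
    intro h0
    have hU : IsUnit (B.submatrix id c).det :=
      (Matrix.isUnit_iff_isUnit_det _).mp hSunit
    rw [← hdetcast, h0] at hU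
    simp at hU
  -- b is nonzero
  have hbj0 : b j₀ = Bz.det := by
    show (if j₀ = j₀ then Bz.det else 0) + ∑ l, (if c l = j₀ then w l else 0) = Bz.det
    rw [if_pos rfl, Finset.sum_eq_zero fun l _ => if_neg (hj₀ l), add_zero]
  have hbne : b ≠ 0 := fun h0 => hdet (by rw [← hbj0, h0]; rfl)
  -- the key identity on selected rows
  have hkey : ∀ k : Fin s, A (r k) ⬝ᵥ b = 0 := by
    intro k
    have hmv : Bz.mulVec w = Bz.det • (-v) := Matrix.mulVec_cramer Bz (-v)
    have hmvk : ∑ l, Bz k l * w l = -(Bz.det * v k) := by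
      have := congrFun hmv k
      simpa [Matrix.mulVec, dotProduct, smul_eq_mul, mul_neg] using this
    calc A (r k) ⬝ᵥ b
        = ∑ j, A (r k) j * ((if j = j₀ then Bz.det else 0)
            + ∑ l, if c l = j then w l else 0) := rfl
      _ = (∑ j, A (r k) j * (if j = j₀ then Bz.det else 0))
            + ∑ j, A (r k) j * ∑ l, if c l = j then w l else 0 := by
          simp [mul_add, Finset.sum_add_distrib]
      _ = A (r k) j₀ * Bz.det + ∑ l, A (r k) (c l) * w l := by
          congr 1
          · simp [mul_ite]
          · have hswap : ∀ l : Fin s,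
                ∑ j, (A (r k) j * if c l = j then w l else 0) = A (r k) (c l) * w l := by
              intro l
              rw [Finset.sum_eq_single (c l)]
              · simp
              · intro j _ hj; rw [if_neg fun h => hj h.symm, mul_zero]
              · intro h; exact absurd (Finset.mem_univ _) h
            calc ∑ j, A (r k) j * ∑ l, (if c l = j then w l else 0)
                = ∑ j, ∑ l, (A (r k) j * if c l = j then w l else 0) := by
                  simp [Finset.mul_sum]
              _ = ∑ l, ∑ j, (A (r k) j * if c l = j then w l else 0) := Finset.sum_comm
              _ = ∑ l, A (r k) (c l) * w l := Finset.sum_congr rfl fun l _ => hswap l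
      _ = 0 := by
          have : ∑ l, A (r k) (c l) * w l = ∑ l, Bz k l * w l := rfl
          rw [this, hmvk, hv]
          ring
  -- A.mulVec b = 0
  set bq : Fin m₂ → ℚ := fun j => ((b j : ℤ) : ℚ) with hbq
  have hcastdot : ∀ i : Fin m₁, ((A i ⬝ᵥ b : ℤ) : ℚ) = Aq i ⬝ᵥ bq := by
    intro i
    simp only [dotProduct, hAq, Matrix.map_apply, Int.coe_castRingHom, hbq]
    push_cast
    rfl
  have hmul : A.mulVec b = 0 := by
    funext i
    have hmem : Aq i ∈ Submodule.span ℚ (Set.range fun k => Aq (r k)) := by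
      rw [hrspan]; exact Submodule.subset_span ⟨i, rfl⟩
    have hzero : ∀ x ∈ Submodule.span ℚ (Set.range fun k => Aq (r k)), x ⬝ᵥ bq = 0 := by
      intro x hx
      induction hx using Submodule.span_induction with
      | mem x hx =>
          obtain ⟨k, rfl⟩ := hx
          show Aq (r k) ⬝ᵥ bq = 0
          rw [← hcastdot (r k), hkey k, Int.cast_zero]
      | zero => simp
      | add x y _ _ hx hy => rw [add_dotProduct, hx, hy, add_zero]
      | smul a x _ hx => rw [smul_dotProduct, hx, smul_zero]
    have : ((A i ⬝ᵥ b : ℤ) : ℚ) = 0 := by rw [hcastdot]; exact hzero _ hmem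
    have h0 : A i ⬝ᵥ b = 0 := by exact_mod_cast this
    simpa [Matrix.mulVec] using h0
  -- the bounds
  have hdb : ∀ D : Matrix (Fin s) (Fin s) ℤ, (∀ k l, |((D k l : ℤ) : ℝ)| ≤ M) →
      |((D.det : ℤ) : ℝ)| ≤ (s.factorial : ℝ) * M ^ s := by
    intro D hD
    have hmapdet : ((D.det : ℤ) : ℝ) = (D.map (Int.cast : ℤ → ℝ)).det := by
      have h2 := RingHom.map_det (Int.castRingHom ℝ) D
      rw [RingHom.mapMatrix_apply] at h2
      exact h2
    have := Matrix.det_le (A := D.map (Int.cast : ℤ → ℝ)) (abv := AbsoluteValue.abs)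
      (x := M) (fun k l => hD k l)
    rw [Fintype.card_fin, nsmul_eq_mul] at this
    rw [hmapdet]
    exact this
  refine ⟨b, hbne, hmul, ?_⟩
  intro j
  by_cases hj : j = j₀
  · subst hj
    rw [hbj0]
    exact hdb Bz fun k l => hbound _ _
  · have hbj : b j = ∑ l, if c l = j then w l else 0 := by
      show (if j = j₀ then Bz.det else 0) + _ = _
      rw [if_neg hj, zero_add]
    by_cases hc : ∃ l, c l = j
    · obtain ⟨l₀, rfl⟩ := hc
      have : b (c l₀) = w l₀ := by
        rw [hbj, Finset.sum_eq_single l₀]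
        · rw [if_pos rfl]
        · intro l _ hl; exact if_neg fun h => hl (hcinj h)
        · intro h; exact absurd (Finset.mem_univ _) h
      rw [this, hw, Matrix.cramer_apply]
      refine hdb _ fun k l => ?_
      rw [Matrix.updateCol_apply]
      by_cases hl : l = l₀
      · rw [if_pos hl]
        simpa using hbound (r k) j₀
      · rw [if_neg hl]
        exact hbound _ _
    · push_neg at hc
      have : b j = 0 := by rw [hbj, Finset.sum_eq_zero fun l _ => if_neg (hc l)]
      rw [this]
      have h1 : (1 : ℝ) ≤ (s.factorial : ℝ) * M ^ s := by
        have hf : (1 : ℝ) ≤ (s.factorial : ℝ) := by exact_mod_cast s.factorial_pos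
        have hp : (1 : ℝ) ≤ M ^ s := one_le_pow₀ hM
        nlinarith
      simpa using le_trans (by norm_num) h1
end
end
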